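/- Neither of the equations 5x² + 6y² = z² nor 5x² − 6y² = z² has a solution in rational numbers with (x, y, z) ≠ (0, 0, 0). -/
import Mathlib

lemma int_descent : ∀ n : ℕ, ∀ x y z : ℤ, x.natAbs + y.natAbs + z.natAbs ≤ n →
    (5 * x ^ 2 + 6 * y ^ 2 = z ^ 2 ∨ 5 * x ^ 2 - 6 * y ^ 2 = z ^ 2) →
    x = 0 ∧ y = 0 ∧ z = 0 := by
  intro n
  induction n with
  | zero => intro x y z hn _; refine ⟨?_, ?_, ?_⟩ <;> omega
  | succ n ih =>
    intro x y z hn h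
    have key : ∀ a b c : ZMod 3,
        (5 * a ^ 2 + 6 * b ^ 2 = c ^ 2 ∨ 5 * a ^ 2 - 6 * b ^ 2 = c ^ 2) →
        a = 0 ∧ c = 0 := by decide
    have h3 : (5 * (x : ZMod 3) ^ 2 + 6 * (y : ZMod 3) ^ 2 = (z : ZMod 3) ^ 2 ∨
        5 * (x : ZMod 3) ^ 2 - 6 * (y : ZMod 3) ^ 2 = (z : ZMod 3) ^ 2) := by
      rcases h with h | h
      · left
        have := congrArg (fun t : ℤ => (t : ZMod 3)) h
        push_cast at this; exact this
      · right
        have := congrArg (fun t : ℤ => (t : ZMod 3)) h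
        push_cast at this; exact this
    obtain ⟨ha0, hc0⟩ := key _ _ _ h3
    obtain ⟨a, rfl⟩ : (3 : ℤ) ∣ x := (ZMod.intCast_zmod_eq_zero_iff_dvd x 3).mp ha0
    obtain ⟨c, rfl⟩ : (3 : ℤ) ∣ z := (ZMod.intCast_zmod_eq_zero_iff_dvd z 3).mp hc0
    have hy3 : (3 : ℤ) ∣ y := by
      have key2 : ∀ b : ZMod 3, 2 * b ^ 2 = 0 → b = 0 := by decide
      have h2 : 2 * y ^ 2 = 3 * (c ^ 2 - 5 * a ^ 2) ∨ 2 * y ^ 2 = 3 * (5 * a ^ 2 - c ^ 2) := by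
        rcases h with h | h
        · left; nlinarith
        · right; nlinarith
      have hz3 : 2 * (y : ZMod 3) ^ 2 = 0 := by
        rcases h2 with h2 | h2 <;>
        · have := congrArg (fun t : ℤ => (t : ZMod 3)) h2
          push_cast at this
          simpa [show (3 : ZMod 3) = 0 by decide] using this
      exact (ZMod.intCast_zmod_eq_zero_iff_dvd y 3).mp (key2 _ hz3)
    obtain ⟨b, rfl⟩ := hy3
    have h' : 5 * a ^ 2 + 6 * b ^ 2 = c ^ 2 ∨ 5 * a ^ 2 - 6 * b ^ 2 = c ^ 2 := by
      rcases h with h | h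
      · left; nlinarith
      · right; nlinarith
    have hn' : a.natAbs + b.natAbs + c.natAbs ≤ n := by
      have h33 : (3 : ℤ).natAbs = 3 := rfl
      simp only [Int.natAbs_mul, h33] at hn
      omega
    obtain ⟨ha, hb, hc⟩ := ih a b c hn' h'
    subst ha; subst hb; subst hc
    simp

theorem no_rational_solutions (x y z : ℚ)
    (h : 5 * x ^ 2 + 6 * y ^ 2 = z ^ 2 ∨ 5 * x ^ 2 - 6 * y ^ 2 = z ^ 2) :
    x = 0 ∧ y = 0 ∧ z = 0 := by
  set X : ℤ := x.num * y.den * z.den with hX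
  set Y : ℤ := y.num * x.den * z.den with hY
  set Z : ℤ := z.num * x.den * y.den with hZ
  have hxd : (x.den : ℚ) ≠ 0 := by exact_mod_cast x.den_ne_zero
  have hyd : (y.den : ℚ) ≠ 0 := by exact_mod_cast y.den_ne_zero
  have hzd : (z.den : ℚ) ≠ 0 := by exact_mod_cast z.den_ne_zero
  have hx : (x.num : ℚ) = x * x.den := (div_eq_iff hxd).mp (Rat.num_div_den x)
  have hy : (y.num : ℚ) = y * y.den := (div_eq_iff hyd).mp (Rat.num_div_den y)
  have hz : (z.num : ℚ) = z * z.den := (div_eq_iff hzd).mp (Rat.num_div_den z)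
  have hint : 5 * X ^ 2 + 6 * Y ^ 2 = Z ^ 2 ∨ 5 * X ^ 2 - 6 * Y ^ 2 = Z ^ 2 := by
    rcases h with h | h
    · left
      have : ((5 * X ^ 2 + 6 * Y ^ 2 : ℤ) : ℚ) = ((Z ^ 2 : ℤ) : ℚ) := by
        push_cast [hX, hY, hZ, hx, hy, hz]
        linear_combination ((x.den : ℚ) * y.den * z.den) ^ 2 * h
      exact_mod_cast this
    · right
      have : ((5 * X ^ 2 - 6 * Y ^ 2 : ℤ) : ℚ) = ((Z ^ 2 : ℤ) : ℚ) := by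
        push_cast [hX, hY, hZ, hx, hy, hz]
        linear_combination ((x.den : ℚ) * y.den * z.den) ^ 2 * h
      exact_mod_cast this
  obtain ⟨hX0, hY0, hZ0⟩ := int_descent _ X Y Z le_rfl hint
  refine ⟨?_, ?_, ?_⟩
  · have : x.num = 0 := by
      have := hX0; rw [hX] at this
      rcases mul_eq_zero.mp this with h' | h'
      · rcases mul_eq_zero.mp h' with h'' | h''
        · exact h''
        · exact absurd h'' (by exact_mod_cast y.den_ne_zero)
      · exact absurd h' (by exact_mod_cast z.den_ne_zero)
    exact Rat.num_eq_zero.mp this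
  · have : y.num = 0 := by
      have := hY0; rw [hY] at this
      rcases mul_eq_zero.mp this with h' | h'
      · rcases mul_eq_zero.mp h' with h'' | h''
        · exact h''
        · exact absurd h'' (by exact_mod_cast x.den_ne_zero)
      · exact absurd h' (by exact_mod_cast z.den_ne_zero)
    exact Rat.num_eq_zero.mp this
  · have : z.num = 0 := by
      have := hZ0; rw [hZ] at this
      rcases mul_eq_zero.mp this with h' | h'
      · rcases mul_eq_zero.mp h' with h'' | h''
        · exact h''
        · exact absurd h'' (by exact_mod_cast x.den_ne_zero)
      · exact absurd h' (by exact_mod_cast y.den_ne_zero)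
    exact Rat.num_eq_zero.mp this
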